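/- arXiv:1704.04704 — 2 statements merged into one kernel-verified Lean document; each statement's English description precedes it below -/
import Mathlib

section
/- Let X = H + X^⊥ where H ∈ g and X^⊥ ∈ T (T a commutative subalgebra), and suppose e^X = e^{X^⊥}. Then H = e^{X^⊥} H e^{-X^⊥}, i.e., H commutes with e^{X^⊥}. -/
open Matrix

noncomputable section

/-- Let `X = H + X^⊥` with `X^⊥` in a commutative subalgebra `T` of the matrix
Lie algebra, and suppose `e^X = e^{X^⊥}`. Then `H = e^{X^⊥} H e^{-X^⊥}`;
i.e. `H` commutes with `e^{X^⊥}`. -/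
theorem H_conjugation_invariant {d : ℕ}
    (T : Submodule ℝ (Matrix (Fin d) (Fin d) ℂ))
    (hTcomm : ∀ S ∈ T, ∀ S' ∈ T, S * S' = S' * S)
    (H Xperp : Matrix (Fin d) (Fin d) ℂ) (hXperp : Xperp ∈ T)
    (hexp : NormedSpace.exp (H + Xperp) = NormedSpace.exp Xperp) :
    H = NormedSpace.exp Xperp * H * NormedSpace.exp (-Xperp) ∧
      H * NormedSpace.exp Xperp = NormedSpace.exp Xperp * H := by
  have h1 : Commute (H + Xperp) (NormedSpace.exp Xperp) := by
    rw [← hexp]; exact (Commute.refl (H + Xperp)).exp_right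
  have h2 : Commute Xperp (NormedSpace.exp Xperp) :=
    (Commute.refl Xperp).exp_right
  have hc : H * NormedSpace.exp Xperp = NormedSpace.exp Xperp * H := by
    have := h1.sub_left h2
    simpa [Commute, SemiconjBy] using this
  refine ⟨?_, hc⟩
  have he : NormedSpace.exp Xperp * NormedSpace.exp (-Xperp) = 1 := by
    rw [← Matrix.exp_add_of_commute _ _ ((Commute.refl Xperp).neg_right), add_neg_cancel,
      NormedSpace.exp_zero]
  rw [← hc, mul_assoc, he, mul_one]
end
end

section
/- With X₁ = [[0,1],[-1,0]], Y₁ = [[0,i],[i,0]], T₁ = diag(-i,i) in su(2) and real a₁, b₁, m with a₁² + b₁² + m²π² = n²π² for some integer n with m ≤ n and m, n of equal parity, and R₁ = 2T₁: the curve γ(t) = e^{t(a₁X₁ + b₁Y₁ + (m/2)πR₁)} e^{-t(m/2)πR₁} satisfies γ(0) = γ(1) = I. -/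
open Matrix

noncomputable section

def T1 : Matrix (Fin 2) (Fin 2) ℂ := !![-Complex.I, 0; 0, Complex.I]
def X1 : Matrix (Fin 2) (Fin 2) ℂ := !![0, 1; -1, 0]
def Y1 : Matrix (Fin 2) (Fin 2) ℂ := !![0, Complex.I; Complex.I, 0]
def R1 : Matrix (Fin 2) (Fin 2) ℂ := (2 : ℂ) • T1

lemma pow_even_of_sq (A : Matrix (Fin 2) (Fin 2) ℂ) (c : ℂ) (hA : A * A = c • 1) (k : ℕ) :
    A ^ (2 * k) = c ^ k • 1 := by
  induction k with
  | zero => simp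
  | succ k ih =>
      have : 2 * (k + 1) = 2 * k + 2 := by ring
      rw [this, pow_add, ih, pow_two, hA, smul_mul_smul_comm, one_mul, pow_succ]

lemma exp_of_sq (A : Matrix (Fin 2) (Fin 2) ℂ) (θ : ℝ) (hθ : θ ≠ 0)
    (hA : A * A = (-(θ : ℂ) ^ 2) • 1) :
    NormedSpace.exp A
      = (Complex.cos θ) • (1 : Matrix (Fin 2) (Fin 2) ℂ)
        + ((Complex.sin θ / θ)) • A := by
  rw [NormedSpace.exp_eq_tsum ℂ]
  refine HasSum.tsum_eq ?_
  refine HasSum.even_add_odd ?_ ?_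
  · have := (Complex.hasSum_cos (θ : ℂ)).smul_const (1 : Matrix (Fin 2) (Fin 2) ℂ)
    convert this using 2 with k
    · rfl
    rw [pow_even_of_sq A _ hA]
    rw [smul_smul]
    congr 1
    field_simp
    ring
  · have := ((Complex.hasSum_sin (θ : ℂ)).div_const (θ : ℂ)).smul_const A
    convert this using 2 with k
    · rfl
    rw [pow_succ, pow_even_of_sq A _ hA, smul_mul_assoc, one_mul, smul_smul]
    congr 1
    have hθ' : (θ : ℂ) ≠ 0 := by exact_mod_cast hθ
    have hf : ((2 * k + 1).factorial : ℂ) ≠ 0 := by exact_mod_cast (2*k+1).factorial_ne_zero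
    field_simp
    ring

lemma exp_int_pi (A : Matrix (Fin 2) (Fin 2) ℂ) (k : ℤ) (hk : k ≠ 0)
    (hA : A * A = (-(((k : ℝ) * Real.pi : ℝ) : ℂ) ^ 2) • 1) :
    NormedSpace.exp A = ((-1 : ℂ) ^ k) • 1 := by
  have hθ : ((k : ℝ) * Real.pi) ≠ 0 := by
    have := Real.pi_ne_zero
    have : (k : ℝ) ≠ 0 := Int.cast_ne_zero.mpr hk
    positivity
  rw [exp_of_sq A _ hθ hA]
  have hs : Complex.sin (((k : ℝ) * Real.pi : ℝ) : ℂ) = 0 := by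
    rw [← Complex.ofReal_sin, Real.sin_int_mul_pi]
    simp
  have hc : Complex.cos (((k : ℝ) * Real.pi : ℝ) : ℂ) = (-1 : ℂ) ^ k := by
    rw [← Complex.ofReal_cos]
    have := Real.cos_add_int_mul_pi 0 k
    simp only [zero_add, Real.cos_zero, mul_one] at this
    rw [this]
    push_cast
    ring
  rw [hs, hc]
  simp

/-- If `a₁² + b₁² + m²π² = n²π²` with integers `m ≤ n` of equal parity, then
`γ(t) = e^{t(a₁X₁ + b₁Y₁ + (m/2)πR₁)} e^{-t(m/2)πR₁}` satisfies
`γ(0) = γ(1) = I`. -/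
theorem su2_subriemannian_loop_closes (a₁ b₁ : ℝ) (m n : ℤ)
    (hmn : m ≤ n) (hpar : m % 2 = n % 2)
    (h : a₁ ^ 2 + b₁ ^ 2 + (m : ℝ) ^ 2 * Real.pi ^ 2 = (n : ℝ) ^ 2 * Real.pi ^ 2) :
    (NormedSpace.exp ((0 : ℝ) • (a₁ • X1 + b₁ • Y1 + ((m : ℝ) / 2 * Real.pi) • R1)) *
        NormedSpace.exp (-((0 : ℝ) • (((m : ℝ) / 2 * Real.pi) • R1))) = 1) ∧
    (NormedSpace.exp ((1 : ℝ) • (a₁ • X1 + b₁ • Y1 + ((m : ℝ) / 2 * Real.pi) • R1)) *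
        NormedSpace.exp (-((1 : ℝ) • (((m : ℝ) / 2 * Real.pi) • R1))) = 1) := by
  constructor
  · simp [NormedSpace.exp_zero]
  · rw [one_smul, one_smul]
    set M : Matrix (Fin 2) (Fin 2) ℂ := a₁ • X1 + b₁ • Y1 + ((m : ℝ) / 2 * Real.pi) • R1 with hM
    set B : Matrix (Fin 2) (Fin 2) ℂ := -(((m : ℝ) / 2 * Real.pi) • R1) with hB
    have hπ := Real.pi_ne_zero
    have h' : (a₁ : ℂ) ^ 2 + (b₁ : ℂ) ^ 2 + (m : ℂ) ^ 2 * (Real.pi : ℂ) ^ 2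
        = (n : ℂ) ^ 2 * (Real.pi : ℂ) ^ 2 := by exact_mod_cast h
    -- entrywise forms
    have hMe : M = !![-(m : ℂ) * Real.pi * Complex.I, (a₁ : ℂ) + b₁ * Complex.I;
        -(a₁ : ℂ) + b₁ * Complex.I, (m : ℂ) * Real.pi * Complex.I] := by
      rw [hM]
      simp only [X1, Y1, R1, T1]
      ext i j
      fin_cases i <;> fin_cases j <;>
        simp [Matrix.add_apply, Matrix.smul_apply, Complex.real_smul] <;> push_cast <;> ring
    have hBe : B = !![(m : ℂ) * Real.pi * Complex.I, 0; 0, -(m : ℂ) * Real.pi * Complex.I] := by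
      rw [hB]
      simp only [R1, T1]
      ext i j
      fin_cases i <;> fin_cases j <;>
        simp [Matrix.smul_apply, Complex.real_smul] <;> push_cast <;> ring
    have hM2 : M * M = (-(((n : ℝ) * Real.pi : ℝ) : ℂ) ^ 2) • 1 := by
      rw [hMe]
      ext i j
      fin_cases i <;> fin_cases j <;>
        simp [Matrix.mul_apply, Fin.sum_univ_two, Matrix.one_apply, Matrix.smul_apply] <;>
        push_cast <;>
        first
          | ring1
          | linear_combination ((b₁:ℂ)^2 + (m:ℂ)^2*(Real.pi:ℂ)^2) * Complex.I_sq - h'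
          | linear_combination ((m:ℂ)^2*(Real.pi:ℂ)^2) * Complex.I_sq
          | linear_combination (-(m:ℂ)^2*(Real.pi:ℂ)^2) * Complex.I_sq
    have hB2 : B * B = (-(((m : ℝ) * Real.pi : ℝ) : ℂ) ^ 2) • 1 := by
      rw [hBe]
      ext i j
      fin_cases i <;> fin_cases j <;>
        simp [Matrix.mul_apply, Fin.sum_univ_two, Matrix.one_apply, Matrix.smul_apply] <;>
        push_cast <;>
        first
          | ring1
          | linear_combination ((m:ℂ)^2*(Real.pi:ℂ)^2) * Complex.I_sq
          | linear_combination (-(m:ℂ)^2*(Real.pi:ℂ)^2) * Complex.I_sq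
    by_cases hn : n = 0
    · -- then a₁ = b₁ = 0, m = 0, so M = 0 and B = 0
      have hm : m = 0 := by
        subst hn
        have h2 : a₁ ^ 2 + b₁ ^ 2 + (m : ℝ) ^ 2 * Real.pi ^ 2 = 0 := by
          simpa using h
        have hmr : (m : ℝ) ^ 2 * Real.pi ^ 2 = 0 := by nlinarith [sq_nonneg a₁, sq_nonneg b₁, sq_nonneg ((m:ℝ) * Real.pi), Real.pi_pos]
        have : (m : ℝ) = 0 := by
          rcases mul_eq_zero.mp hmr with h3 | h3
          · exact pow_eq_zero_iff (n := 2) (by norm_num) |>.mp h3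
          · exact absurd (pow_eq_zero_iff (n := 2) (by norm_num) |>.mp h3) hπ
        exact_mod_cast this
      have ha : a₁ = 0 := by
        subst hn; subst hm
        simp at h
        nlinarith [sq_nonneg a₁, sq_nonneg b₁]
      have hb : b₁ = 0 := by
        subst hn; subst hm
        simp at h
        nlinarith [sq_nonneg a₁, sq_nonneg b₁]
      have : M = 0 := by
        rw [hMe, hm, ha, hb]
        ext i j; fin_cases i <;> fin_cases j <;> simp
      have hB0 : B = 0 := by
        rw [hBe, hm]
        ext i j; fin_cases i <;> fin_cases j <;> simp
      rw [this, hB0, NormedSpace.exp_zero, one_mul]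
    · by_cases hm : m = 0
      · have hB0 : B = 0 := by
          rw [hBe, hm]
          ext i j; fin_cases i <;> fin_cases j <;> simp
        rw [hB0, NormedSpace.exp_zero, mul_one, exp_int_pi M n hn hM2]
        have hneven : Even n := by
          rw [hm] at hpar
          exact Int.even_iff.mpr (by omega)
        rw [Even.neg_one_zpow (by exact_mod_cast hneven)]
        simp
      · rw [exp_int_pi M n hn hM2, exp_int_pi B m hm hB2, smul_mul_smul_comm, one_mul,
          ← zpow_add₀ (by norm_num : (-1 : ℂ) ≠ 0)]
        have : Even (n + m) := Int.even_iff.mpr (by omega)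
        rw [Even.neg_one_zpow (by exact_mod_cast this)]
        simp
end
end
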